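/- Let a be an inner product on a finite-dimensional real vector space V and β a linear form on V with a-norm strictly less than 1; write β(v) = a(v, B) for a unique vector B. Set μ = 1 − a(B,B), h(w,u) = μ(a(w,u) − a(B,w)a(B,u)), and W = −B/μ. Then h is a positive-definite inner product, h(W,W) < 1, and the Randers norm Z(v) = √(a(v,v)) + β(v) satisfies h(v/Z(v) − W, v/Z(v) − W) = 1 for all v ≠ 0. -/

import Mathlib

open scoped RealInnerProductSpace

/-- From a Randers norm `Z(v) = √(a(v,v)) + a(v,B)` (with `a` the inner product of the space
and `a(B,B) < 1`), the formulas `h(w,u) = μ(a(w,u) − a(B,w)a(B,u))`, `W = −B/μ`,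
`μ = 1 − a(B,B)` give a positive-definite inner product `h` with `h(W,W) < 1` such that
`Z` solves the Zermelo equation for the data `(h, W)`. -/
theorem randers_gives_zermelo_data {V : Type*} [NormedAddCommGroup V] [InnerProductSpace ℝ V]
    [FiniteDimensional ℝ V] (B : V) (hB : ⟪B, B⟫ < 1)
    (h : V → V → ℝ)
    (hdef : ∀ w u : V, h w u = (1 - ⟪B, B⟫) * (⟪w, u⟫ - ⟪B, w⟫ * ⟪B, u⟫))
    (W : V) (hWdef : W = -((1 - ⟪B, B⟫)⁻¹ • B))
    (Z : V → ℝ) (hZdef : ∀ v : V, Z v = Real.sqrt ⟪v, v⟫ + ⟪v, B⟫) :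
    (∀ v : V, v ≠ 0 → 0 < h v v) ∧ h W W < 1 ∧
      ∀ v : V, v ≠ 0 → h ((Z v)⁻¹ • v - W) ((Z v)⁻¹ • v - W) = 1 := by
  have hb0 : 0 ≤ ⟪B, B⟫ := real_inner_self_nonneg
  have hμ : 0 < 1 - ⟪B, B⟫ := by linarith
  have hμ' : (1 : ℝ) - ⟪B, B⟫ ≠ 0 := ne_of_gt hμ
  have hBB : ⟪B, B⟫ = ‖B‖ ^ 2 := real_inner_self_eq_norm_sq B
  have hBnorm : ‖B‖ < 1 := by nlinarith [norm_nonneg B]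
  refine ⟨?_, ?_, ?_⟩
  · intro v hv
    rw [hdef]
    have h1 : |⟪B, v⟫| ≤ ‖B‖ * ‖v‖ := abs_real_inner_le_norm B v
    have h2 : ⟪v, v⟫ = ‖v‖ ^ 2 := real_inner_self_eq_norm_sq v
    have hv0 : 0 < ‖v‖ := norm_pos_iff.mpr hv
    have key : ⟪B, v⟫ ^ 2 ≤ ‖B‖ ^ 2 * ‖v‖ ^ 2 := by
      nlinarith [abs_nonneg ⟪B, v⟫, sq_abs ⟪B, v⟫]
    have key2 : 0 < ⟪v, v⟫ - ⟪B, v⟫ * ⟪B, v⟫ := by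
      nlinarith [key, h2, hBB, hB, mul_pos (show (0:ℝ) < 1 - ‖B‖ ^ 2 by nlinarith)
        (mul_pos hv0 hv0)]
    exact mul_pos hμ key2
  · rw [hdef, hWdef]
    simp only [inner_neg_neg, inner_neg_left, inner_neg_right, inner_smul_left,
      inner_smul_right, RCLike.ofReal_real_eq_id, id_eq, conj_trivial]
    field_simp
    nlinarith [mul_pos (mul_pos hμ hμ) hμ]
  · intro v hv
    have hv0 : 0 < ‖v‖ := norm_pos_iff.mpr hv
    have h2 : ⟪v, v⟫ = ‖v‖ ^ 2 := real_inner_self_eq_norm_sq v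
    have hs : Real.sqrt ⟪v, v⟫ = ‖v‖ := by
      rw [h2, Real.sqrt_sq (norm_nonneg v)]
    have h1 : |⟪v, B⟫| ≤ ‖v‖ * ‖B‖ := abs_real_inner_le_norm v B
    have habs : |⟪v, B⟫| < ‖v‖ := by
      calc |⟪v, B⟫| ≤ ‖v‖ * ‖B‖ := h1
        _ < ‖v‖ := by nlinarith
    have hZpos : 0 < Z v := by
      rw [hZdef, hs]
      have := abs_lt.mp habs
      linarith [this.1]
    have hZne : Z v ≠ 0 := ne_of_gt hZpos
    have hvv : ⟪v, v⟫ = (Z v - ⟪v, B⟫) ^ 2 := by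
      rw [hZdef, hs]; ring_nf; rw [h2]
    rw [hdef, hWdef, sub_neg_eq_add]
    simp only [inner_add_left, inner_add_right, inner_smul_left, inner_smul_right,
      RCLike.ofReal_real_eq_id, id_eq, conj_trivial, real_inner_comm B v]
    rw [hvv]
    field_simp
    rw [show ⟪B, v⟫ = ⟪v, B⟫ from real_inner_comm v B]
    ring
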